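/- For every integer m > 1, the join H of m disjoint copies of the 5-cycle C5 contains no induced P3∪K1 and no induced K2∪2K1, and satisfies χ(H) > ω(H) + 1. -/

import Mathlib

open SimpleGraph

/-- `G` contains no induced copy of `H`: there is no graph embedding of `H` into `G`
(graph embeddings are injective maps with `Adj (f a) (f b) ↔ Adj a b`, i.e. induced copies). -/
def IndFree {α : Type*} {V : Type*} (H : SimpleGraph α) (G : SimpleGraph V) : Prop :=
  IsEmpty (H ↪g G)

/-- The Chair: the 5-vertex tree with edges v0v1, v1v2, v2v3, v2v4. -/
def chairGraph : SimpleGraph (Fin 5) :=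
  SimpleGraph.fromEdgeSet {s(0, 1), s(1, 2), s(2, 3), s(2, 4)}

/-- `P4 + K1`: the disjoint union of a path on 4 vertices and an isolated vertex. -/
def p4PlusK1 : SimpleGraph (Fin 5) :=
  SimpleGraph.fromEdgeSet {s(0, 1), s(1, 2), s(2, 3)}

/-- The claw `K_{1,3}`. -/
def clawGraph : SimpleGraph (Fin 4) :=
  SimpleGraph.fromEdgeSet {s(0, 1), s(0, 2), s(0, 3)}

/-- `P3 ∪ K1`: the disjoint union of a path on 3 vertices and an isolated vertex. -/
def p3UnionK1 : SimpleGraph (Fin 4) :=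
  SimpleGraph.fromEdgeSet {s(0, 1), s(1, 2)}

/-- `K2 ∪ 2K1`: the disjoint union of an edge and two isolated vertices. -/
def k2Union2K1 : SimpleGraph (Fin 4) :=
  SimpleGraph.fromEdgeSet {s(0, 1)}

/-- HVN: `K4` on vertices 0,1,2,3 together with vertex 4 joined to exactly 0 and 1. -/
def hvnGraph : SimpleGraph (Fin 5) :=
  SimpleGraph.fromEdgeSet
    {s(0, 1), s(0, 2), s(0, 3), s(1, 2), s(1, 3), s(2, 3), s(0, 4), s(1, 4)}

/-- `K5 - e`: the complete graph on 5 vertices minus one edge. -/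
def k5MinusE : SimpleGraph (Fin 5) :=
  (completeGraph (Fin 5)).deleteEdges {s(0, 1)}

/-- The join of `m` disjoint copies of the 5-cycle `C5`: vertices in the same copy are
adjacent according to `C5`, and all vertices in distinct copies are adjacent. -/
def joinC5 (m : ℕ) : SimpleGraph (Fin m × Fin 5) :=
  SimpleGraph.fromRel (fun p q => p.1 ≠ q.1 ∨ (SimpleGraph.cycleGraph 5).Adj p.2 q.2)

lemma joinC5_adj {m : ℕ} {p q : Fin m × Fin 5} :
    (joinC5 m).Adj p q ↔ p ≠ q ∧ (p.1 ≠ q.1 ∨ (SimpleGraph.cycleGraph 5).Adj p.2 q.2) := by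
  rw [joinC5, fromRel_adj]
  constructor
  · rintro ⟨h, h2 | h2⟩
    · exact ⟨h, h2⟩
    · rcases h2 with h2 | h2
      · exact ⟨h, Or.inl (Ne.symm h2)⟩
      · exact ⟨h, Or.inr h2.symm⟩
  · rintro ⟨h, h2⟩
    exact ⟨h, Or.inl h2⟩

lemma joinC5_not_adj {m : ℕ} {p q : Fin m × Fin 5} (hne : p ≠ q) (h : ¬(joinC5 m).Adj p q) :
    p.1 = q.1 ∧ ¬(SimpleGraph.cycleGraph 5).Adj p.2 q.2 := by
  rw [joinC5_adj] at h
  push_neg at h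
  rcases h hne with ⟨h1, h2⟩
  exact ⟨h1, h2⟩

lemma c5_no_three_nonnbrs : ∀ v a b c : Fin 5, a ≠ b → a ≠ c → b ≠ c → v ≠ a → v ≠ b → v ≠ c →
    ¬(SimpleGraph.cycleGraph 5).Adj v a → ¬(SimpleGraph.cycleGraph 5).Adj v b →
    ¬(SimpleGraph.cycleGraph 5).Adj v c → False := by decide

lemma c5_triangle_free : ∀ a b c : Fin 5, (SimpleGraph.cycleGraph 5).Adj a b →
    (SimpleGraph.cycleGraph 5).Adj a c → (SimpleGraph.cycleGraph 5).Adj b c → False := by decide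

lemma no_embed {m : ℕ} {α : Type*} {H : SimpleGraph α} (e : H ↪g joinC5 m)
    (w a b c : α) (hab : a ≠ b) (hac : a ≠ c) (hbc : b ≠ c)
    (hwa : w ≠ a) (hwb : w ≠ b) (hwc : w ≠ c)
    (ha : ¬H.Adj w a) (hb : ¬H.Adj w b) (hc : ¬H.Adj w c) : False := by
  have fa := joinC5_not_adj (fun h => hwa (e.injective h)) (fun h => ha (e.map_rel_iff.mp h))
  have fb := joinC5_not_adj (fun h => hwb (e.injective h)) (fun h => hb (e.map_rel_iff.mp h))
  have fc := joinC5_not_adj (fun h => hwc (e.injective h)) (fun h => hc (e.map_rel_iff.mp h))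
  have snd_ne : ∀ x y : α, x ≠ y → (e w).1 = (e x).1 → (e w).1 = (e y).1 →
      (e x).2 ≠ (e y).2 := by
    intro x y hxy h1 h2 h
    exact hxy (e.injective (Prod.ext (h1.symm.trans h2) h))
  have wx_ne : ∀ x : α, w ≠ x → (e w).1 = (e x).1 → (e w).2 ≠ (e x).2 := by
    intro x hx h1 h
    exact hx (e.injective (Prod.ext h1 h))
  exact c5_no_three_nonnbrs (e w).2 (e a).2 (e b).2 (e c).2
    (snd_ne a b hab fa.1 fb.1) (snd_ne a c hac fa.1 fc.1) (snd_ne b c hbc fb.1 fc.1)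
    (wx_ne a hwa fa.1) (wx_ne b hwb fb.1) (wx_ne c hwc fc.1) fa.2 fb.2 fc.2

lemma three_colors {n : ℕ} (f : Fin 5 → Fin n)
    (hf : ∀ a b : Fin 5, (SimpleGraph.cycleGraph 5).Adj a b → f a ≠ f b) :
    ∃ k, f k ≠ f 0 ∧ f k ≠ f 1 := by
  have h12 := hf 1 2 (by decide)
  have h23 := hf 2 3 (by decide)
  have h34 := hf 3 4 (by decide)
  have h40 := hf 4 0 (by decide)
  by_cases h2 : f 2 = f 0
  · by_cases h3 : f 3 = f 1
    · exact ⟨4, h40, fun h => h34 (h3.trans h.symm)⟩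
    · exact ⟨3, fun h => h23 (h2.trans h.symm), h3⟩
  · exact ⟨2, h2, fun h => h12 h.symm⟩

lemma joinC5_colorable_bound {m n : ℕ} (h : (joinC5 m).Colorable n) : 3 * m ≤ n := by
  obtain ⟨C⟩ := h
  set S : Fin m → Finset (Fin n) := fun i => Finset.image (fun j => C (i, j)) Finset.univ with hS
  have hadj : ∀ (i : Fin m) (a b : Fin 5), (SimpleGraph.cycleGraph 5).Adj a b →
      C (i, a) ≠ C (i, b) := by
    intro i a b hab
    exact C.valid (joinC5_adj.mpr ⟨fun h => hab.ne (congrArg Prod.snd h), Or.inr hab⟩)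
  have hcard : ∀ i, 3 ≤ (S i).card := by
    intro i
    obtain ⟨k, hk0, hk1⟩ := three_colors (fun j => C (i, j)) (hadj i)
    have h01 : C (i, 0) ≠ C (i, 1) := hadj i 0 1 (by decide)
    refine Finset.two_lt_card.mpr ⟨C (i, 0), ?_, C (i, 1), ?_, C (i, k), ?_,
      h01, fun h => hk0 h.symm, fun h => hk1 h.symm⟩ <;>
      exact Finset.mem_image.mpr ⟨_, Finset.mem_univ _, rfl⟩
  have hdisj : ∀ i ∈ (Finset.univ : Finset (Fin m)), ∀ j ∈ (Finset.univ : Finset (Fin m)),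
      i ≠ j → Disjoint (S i) (S j) := by
    intro i _ j _ hij
    rw [Finset.disjoint_left]
    intro x hxi hxj
    obtain ⟨a, _, ha⟩ := Finset.mem_image.mp hxi
    obtain ⟨b, _, hb⟩ := Finset.mem_image.mp hxj
    have : (joinC5 m).Adj (i, a) (j, b) :=
      joinC5_adj.mpr ⟨fun h => hij (congrArg Prod.fst h), Or.inl hij⟩
    exact C.valid this (ha.trans hb.symm)
  calc 3 * m = ∑ _i : Fin m, 3 := by simp [mul_comm]
    _ ≤ ∑ i : Fin m, (S i).card := Finset.sum_le_sum fun i _ => hcard i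
    _ = (Finset.univ.biUnion S).card := (Finset.card_biUnion hdisj).symm
    _ ≤ Fintype.card (Fin n) := Finset.card_le_card (Finset.subset_univ _)
    _ = n := Fintype.card_fin n

lemma joinC5_cliqueNum_le {m : ℕ} : (joinC5 m).cliqueNum ≤ 2 * m := by
  obtain ⟨s, hs⟩ := (joinC5 m).exists_isNClique_cliqueNum
  rw [← hs.card_eq]
  rw [Finset.card_eq_sum_card_fiberwise (f := Prod.fst) (t := Finset.univ)
    (fun x _ => Finset.mem_univ _)]
  calc ∑ i : Fin m, (s.filter fun p => p.1 = i).card ≤ ∑ _i : Fin m, 2 := by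
        refine Finset.sum_le_sum fun i _ => ?_
        by_contra hlt
        push_neg at hlt
        obtain ⟨a, ha, b, hb, c, hc, hab, hac, hbc⟩ := Finset.two_lt_card.mp hlt
        obtain ⟨has, hai⟩ := Finset.mem_filter.mp ha
        obtain ⟨hbs, hbi⟩ := Finset.mem_filter.mp hb
        obtain ⟨hcs, hci⟩ := Finset.mem_filter.mp hc
        have adjab := (joinC5_adj.mp (hs.isClique has hbs hab)).2
        have adjac := (joinC5_adj.mp (hs.isClique has hcs hac)).2
        have adjbc := (joinC5_adj.mp (hs.isClique hbs hcs hbc)).2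
        rw [hai, hbi] at adjab
        rw [hai, hci] at adjac
        rw [hbi, hci] at adjbc
        simp only [ne_eq, not_true_eq_false, false_or] at adjab adjac adjbc
        exact c5_triangle_free a.2 b.2 c.2 adjab adjac adjbc
    _ = 2 * m := by simp [mul_comm]


theorem joinC5_free_and_chi_gt_omega_add_one (m : ℕ) (hm : 1 < m) :
    IndFree p3UnionK1 (joinC5 m) ∧ IndFree k2Union2K1 (joinC5 m) ∧
      (((joinC5 m).cliqueNum + 1 : ℕ) : ℕ∞) < (joinC5 m).chromaticNumber := by
  refine ⟨⟨fun e => no_embed e 3 0 1 2 (by decide) (by decide) (by decide) (by decide)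
      (by decide) (by decide) (by simp [p3UnionK1]) (by simp [p3UnionK1])
      (by simp [p3UnionK1])⟩,
    ⟨fun e => no_embed e 3 0 1 2 (by decide) (by decide) (by decide) (by decide)
      (by decide) (by decide) (by simp [k2Union2K1]) (by simp [k2Union2K1])
      (by simp [k2Union2K1])⟩, ?_⟩
  have h1 : (joinC5 m).cliqueNum ≤ 2 * m := joinC5_cliqueNum_le
  have h2 : ((3 * m : ℕ) : ℕ∞) ≤ (joinC5 m).chromaticNumber := by
    rw [SimpleGraph.chromaticNumber]
    exact le_iInf₂ fun n hn => by exact_mod_cast joinC5_colorable_bound hn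
  calc (((joinC5 m).cliqueNum + 1 : ℕ) : ℕ∞) ≤ ((2 * m + 1 : ℕ) : ℕ∞) := by
        exact_mod_cast Nat.add_le_add_right h1 1
    _ < ((3 * m : ℕ) : ℕ∞) := by exact_mod_cast (by omega : 2 * m + 1 < 3 * m)
    _ ≤ _ := h2
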